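/- Critical Grönwall-type lemma for two-parameter functions (Lemma B.1): Let (E,‖·‖) be a normed real vector space, ℓ>0, C₁,C₂ ≥ 0 and η ∈ (0,1). Suppose f : {(s,t) : 0 ≤ s ≤ t ≤ 1} → E satisfies: (i) f is bounded, f_{0,0} = 0, and for all 0 ≤ s ≤ t ≤ 1 with t−s ≤ ℓ, ‖f_{s,t}‖ ≤ C₁·(M_{s,t}+η)·(t−s)^{1/2} + C₂·(M_{s,t}+η)·|log(M_{s,t}+η)|·(t−s), where M_{s,t} := sup_{r∈[s,t]} ‖f_{0,r}‖; (ii) for all 0 ≤ s ≤ t ≤ 1, ‖f_{0,t}‖ − ‖f_{0,s}‖ ≤ ‖f_{s,t}‖. Then for every δ ∈ (0, e^{−C₂}) there exists η̄ > 0, depending only on C₁, C₂, ℓ and δ, such that whenever η < η̄ and f satisfies (i)–(ii), one has sup_{t∈[0,1]} ‖f_{0,t}‖ ≤ η^{e^{−C₂}−δ}. -/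

import Mathlib

open Real Set

set_option maxHeartbeats 1000000

private lemma aux_neg_log_one_sub {y : ℝ} (h1 : y ≤ 1/2) :
    -Real.log (1 - y) ≤ y * (1 + 2*y) := by
  have hy : (0:ℝ) < 1 - y := by linarith
  have h2 := Real.log_le_sub_one_of_pos (inv_pos.2 hy)
  rw [Real.log_inv] at h2
  have h3 : (1 - y) * (1 - y)⁻¹ = 1 := mul_inv_cancel₀ hy.ne'
  nlinarith [h2, h3, hy, sq_nonneg y, mul_nonneg (sq_nonneg y) (by linarith : (0:ℝ) ≤ 1 - 2*y)]

private lemma aux_xlogx {x u : ℝ} (hx : 0 < x) (hxu : x ≤ u) (hu : u ≤ Real.exp (-1)) :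
    x * (-Real.log x) ≤ u * (-Real.log u) := by
  have hu0 : 0 < u := lt_of_lt_of_le hx hxu
  have hlu : Real.log u ≤ -1 := by
    have := (Real.log_le_log_iff hu0 (Real.exp_pos _)).2 hu
    rwa [Real.log_exp] at this
  have hdiv : Real.log (u / x) ≤ u / x - 1 := Real.log_le_sub_one_of_pos (by positivity)
  rw [Real.log_div hu0.ne' hx.ne'] at hdiv
  have h2 : x * (Real.log u - Real.log x) ≤ u - x := by
    have h4 := mul_le_mul_of_nonneg_left hdiv hx.le
    have hx' : x * (u / x - 1) = u - x := by field_simp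
    linarith [h4, hx'.le, hx'.ge]
  nlinarith [h2, mul_nonneg (sub_nonneg.2 hxu) (by linarith : (0:ℝ) ≤ -1 - Real.log u)]

private lemma aux_exp_le_pow {a : ℝ} (n : ℕ) (h1 : a ≤ 1/2) (h0 : 0 ≤ a) :
    Real.exp (-((n:ℝ) * (a / (1 - a)))) ≤ (1 - a)^n := by
  have ha : (0:ℝ) < 1 - a := by linarith
  have h2 := Real.log_le_sub_one_of_pos (inv_pos.2 ha)
  rw [Real.log_inv] at h2
  have h3 : (1-a)⁻¹ - 1 = a / (1-a) := by field_simp; ring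
  have hbase : Real.exp (-(a / (1 - a))) ≤ 1 - a := by
    rw [← Real.le_log_iff_exp_le ha]
    linarith
  calc Real.exp (-((n:ℝ) * (a / (1 - a)))) = Real.exp (-(a / (1-a)))^n := by
        rw [← Real.exp_nat_mul]; ring_nf
      _ ≤ (1 - a)^n := pow_le_pow_left₀ (Real.exp_nonneg _) hbase n

private lemma iter_lemma (m : ℝ → ℝ) (η C₁ C₂ h r T : ℝ)
    (hη : 0 < η) (hL₀ : 1 ≤ -Real.log η)
    (hC₁ : 0 ≤ C₁) (hC₂ : 0 ≤ C₂)
    (hh : 0 < h) (hr : 0 < r) (hr2 : r ≤ 1/2)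
    (h1 : C₁ * Real.sqrt h ≤ r/2) (h2 : C₂ * (-Real.log η) * h ≤ r/2)
    (hT1 : T ≤ 1)
    (hm0 : m 0 = η)
    (hmono : ∀ s t : ℝ, 0 ≤ s → s ≤ t → t ≤ 1 → m s ≤ m t)
    (hstep : ∀ s t : ℝ, 0 ≤ s → s ≤ t → t ≤ 1 → t - s ≤ h → m t ≤ Real.exp (-1) →
        m t ≤ m s + m t * (C₁ * Real.sqrt (t-s) + C₂ * (-Real.log (m t)) * (t - s)))
    (hθ : ∀ t : ℝ, 0 ≤ t → t ≤ T → m t ≤ Real.exp (-1)) :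
    ∀ t : ℝ, 0 ≤ t → t ≤ T → ∀ k : ℕ, t ≤ k * h →
      (-Real.log η) * (1 - (1+2*r)*C₂*h)^k - k * ((1+2*r)*C₁*Real.sqrt h) ≤ -Real.log (m t) := by
  obtain ⟨L₀, hL₀def⟩ : ∃ x : ℝ, x = -Real.log η := ⟨_, rfl⟩
  obtain ⟨a, hadef⟩ : ∃ x : ℝ, x = (1+2*r)*C₂*h := ⟨_, rfl⟩
  obtain ⟨c, hcdef⟩ : ∃ x : ℝ, x = (1+2*r)*C₁*Real.sqrt h := ⟨_, rfl⟩
  rw [← hL₀def] at hL₀ h2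
  rw [← hadef, ← hcdef, ← hL₀def]
  have hsqh0 : 0 ≤ Real.sqrt h := Real.sqrt_nonneg h
  have hmη : ∀ t : ℝ, 0 ≤ t → t ≤ 1 → η ≤ m t := fun t ht0 ht1 => hm0 ▸ hmono 0 t le_rfl ht0 ht1
  have hc0 : 0 ≤ c := by
    rw [hcdef]
    exact mul_nonneg (mul_nonneg (by linarith) hC₁) hsqh0
  have ha0 : 0 ≤ a := by
    rw [hadef]
    exact mul_nonneg (mul_nonneg (by linarith) hC₂) hh.le
  have har : a ≤ r := by
    rw [hadef]
    have h3 : C₂ * h ≤ r/2 := by nlinarith [mul_nonneg hC₂ hh.le]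
    nlinarith [mul_nonneg hC₂ hh.le]
  have hkey : ∀ s t : ℝ, 0 ≤ s → s ≤ t → t ≤ T → t - s ≤ h →
      (-Real.log (m s)) * (1 - a) - c ≤ -Real.log (m t) := by
    intro s t hs0 hst htT hd
    have ht1 : t ≤ 1 := htT.trans hT1
    have hms : 0 < m s := lt_of_lt_of_le hη (hmη s hs0 (hst.trans ht1))
    have hmt : 0 < m t := lt_of_lt_of_le hη (hmη t (hs0.trans hst) ht1)
    have hmsu : m s ≤ Real.exp (-1) := hθ s hs0 (hst.trans htT)
    have hmtu : m t ≤ Real.exp (-1) := hθ t (hs0.trans hst) htT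
    have hLt1 : 1 ≤ -Real.log (m t) := by
      have := (Real.log_le_log_iff hmt (Real.exp_pos _)).2 hmtu
      rw [Real.log_exp] at this; linarith
    have hLs1 : 1 ≤ -Real.log (m s) := by
      have := (Real.log_le_log_iff hms (Real.exp_pos _)).2 hmsu
      rw [Real.log_exp] at this; linarith
    have hLts : -Real.log (m t) ≤ -Real.log (m s) := by
      have := (Real.log_le_log_iff hms hmt).2 (hmono s t hs0 hst ht1)
      linarith
    have hLtL₀ : -Real.log (m t) ≤ L₀ := by
      have := (Real.log_le_log_iff hη hmt).2 (hmη t (hs0.trans hst) ht1)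
      rw [hL₀def]; linarith
    have hd0 : 0 ≤ t - s := by linarith
    obtain ⟨x, hxdef⟩ : ∃ y : ℝ,
        y = C₁ * Real.sqrt (t-s) + C₂ * (-Real.log (m t)) * (t - s) := ⟨_, rfl⟩
    have hx0 : 0 ≤ x := by
      rw [hxdef]
      have h5 : 0 ≤ C₂ * (-Real.log (m t)) * (t-s) :=
        mul_nonneg (mul_nonneg hC₂ (by linarith)) hd0
      have h6 : 0 ≤ C₁ * Real.sqrt (t-s) := mul_nonneg hC₁ (Real.sqrt_nonneg _)
      linarith
    have hxr : x ≤ r := by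
      have h6 : C₁ * Real.sqrt (t-s) ≤ C₁ * Real.sqrt h :=
        mul_le_mul_of_nonneg_left (Real.sqrt_le_sqrt hd) hC₁
      have h7 : C₂ * (-Real.log (m t)) * (t-s) ≤ C₂ * L₀ * h := by
        apply mul_le_mul (mul_le_mul_of_nonneg_left hLtL₀ hC₂) hd
          hd0 (mul_nonneg hC₂ (by rw [hL₀def]; linarith))
      rw [hxdef]; linarith
    have hstep' := hstep s t hs0 hst ht1 hd hmtu
    rw [← hxdef] at hstep'
    have hmul : m t * (1 - x) ≤ m s := by nlinarith [hstep']
    have hx12 : x ≤ 1/2 := by linarith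
    have h1x : (0:ℝ) < 1 - x := by linarith
    have hlog : Real.log (m t) + Real.log (1-x) ≤ Real.log (m s) := by
      have := (Real.log_le_log_iff (mul_pos hmt h1x) hms).2 hmul
      rwa [Real.log_mul hmt.ne' h1x.ne'] at this
    have hnl : -Real.log (1-x) ≤ x * (1 + 2*x) := aux_neg_log_one_sub hx12
    have hLx : -Real.log (m s) - x * (1+2*r) ≤ -Real.log (m t) := by
      have : x * (1+2*x) ≤ x * (1+2*r) := by nlinarith
      linarith
    have hxb : x * (1+2*r) ≤ c + a * (-Real.log (m s)) := by
      rw [hxdef, hcdef, hadef]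
      have h6 : C₁ * Real.sqrt (t-s) ≤ C₁ * Real.sqrt h :=
        mul_le_mul_of_nonneg_left (Real.sqrt_le_sqrt hd) hC₁
      have h7 : C₂ * (-Real.log (m t)) * (t-s) ≤ C₂ * (-Real.log (m s)) * h := by
        apply mul_le_mul (mul_le_mul_of_nonneg_left hLts hC₂) hd hd0
          (mul_nonneg hC₂ (by linarith))
      nlinarith [h6, h7]
    nlinarith [hLx, hxb]
  intro t ht0 htT k
  induction k generalizing t with
  | zero =>
    intro htk
    simp only [Nat.cast_zero, zero_mul] at htk
    have ht00 : t = 0 := le_antisymm htk ht0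
    subst ht00
    rw [hm0]
    simp [hL₀def]
  | succ k ih =>
    intro htk
    set s : ℝ := max (t - h) 0 with hsdef
    have hs0 : 0 ≤ s := le_max_right _ _
    have hst : s ≤ t := max_le (by linarith) ht0
    have hsT : s ≤ T := hst.trans htT
    have hsk : s ≤ k * h := by
      apply max_le _ (mul_nonneg (Nat.cast_nonneg k) hh.le)
      push_cast at htk ⊢
      linarith
    have hd : t - s ≤ h := by
      have := le_max_left (t - h) 0
      linarith [this]
    have hks := ih s hs0 hsT hsk
    have hk2 := hkey s t hs0 hst htT hd
    have h1a : 0 ≤ 1 - a := by linarith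
    have hpow : (0:ℝ) ≤ (1 - a)^k := pow_nonneg h1a k
    have hL₀0 : 0 ≤ L₀ := by rw [hL₀def]; linarith
    calc L₀ * (1-a)^(k+1) - (k+1 : ℕ) * c
        ≤ (L₀ * (1-a)^k - k * c) * (1-a) - c := by
          push_cast
          have he : L₀ * (1-a)^(k+1) = (L₀ * (1-a)^k) * (1-a) := by ring
          rw [he]
          nlinarith [mul_nonneg (mul_nonneg (Nat.cast_nonneg' k : (0:ℝ) ≤ k) hc0) ha0]
      _ ≤ (-Real.log (m s)) * (1-a) - c := by nlinarith [hks]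
      _ ≤ -Real.log (m t) := hk2

/-- **Critical Grönwall-type lemma for two-parameter functions** (Lemma B.1).
Let `(E,‖·‖)` be a normed real vector space, `ℓ > 0`, `C₁, C₂ ≥ 0`.  For every
`δ ∈ (0, e^{-C₂})` there exists `ηBar > 0` (depending only on `C₁, C₂, ℓ, δ`) such that
for every `η ∈ (0,1)` with `η < ηBar` and every `f : Δ_{[0,1]} → E` which is bounded,
satisfies `f₀₀ = 0`, the increment bound (i) (with
`M_{s,t} = sup_{r ∈ [s,t]} ‖f_{0,r}‖`) on intervals of length at most `ℓ`, and the
monotonicity condition (ii), one has `sup_{t ∈ [0,1]} ‖f_{0,t}‖ ≤ η^{e^{-C₂} - δ}`. -/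
theorem critical_gronwall_two_parameter
    {E : Type*} [NormedAddCommGroup E] [NormedSpace ℝ E]
    (ℓ C₁ C₂ : ℝ) (hℓ : 0 < ℓ) (hC₁ : 0 ≤ C₁) (hC₂ : 0 ≤ C₂)
    (δ : ℝ) (hδ : 0 < δ) (hδ' : δ < Real.exp (-C₂)) :
    ∃ ηBar : ℝ, 0 < ηBar ∧
      ∀ η : ℝ, 0 < η → η < 1 → η < ηBar →
      ∀ f : ℝ → ℝ → E,
        -- (i) boundedness
        (∃ B : ℝ, ∀ s t : ℝ, 0 ≤ s → s ≤ t → t ≤ 1 → ‖f s t‖ ≤ B) →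
        -- (i) f_{0,0} = 0
        f 0 0 = 0 →
        -- (i) the increment bound, with M_{s,t} = sup_{r ∈ [s,t]} ‖f_{0,r}‖
        (∀ s t : ℝ, 0 ≤ s → s ≤ t → t ≤ 1 → t - s ≤ ℓ →
          ‖f s t‖ ≤
            C₁ * ((⨆ r : Icc s t, ‖f 0 (r : ℝ)‖) + η) * (t - s) ^ ((1 : ℝ) / 2)
            + C₂ * ((⨆ r : Icc s t, ‖f 0 (r : ℝ)‖) + η)
                * |Real.log ((⨆ r : Icc s t, ‖f 0 (r : ℝ)‖) + η)| * (t - s)) →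
        -- (ii)
        (∀ s t : ℝ, 0 ≤ s → s ≤ t → t ≤ 1 → ‖f 0 t‖ - ‖f 0 s‖ ≤ ‖f s t‖) →
        -- conclusion: sup_{t ∈ [0,1]} ‖f_{0,t}‖ ≤ η^{e^{-C₂} - δ}
        ∀ t : ℝ, 0 ≤ t → t ≤ 1 → ‖f 0 t‖ ≤ η ^ (Real.exp (-C₂) - δ) := by
  -- fixed constants
  have hα : 0 < Real.exp (-C₂) - δ := by linarith
  obtain ⟨α, hαdef⟩ : ∃ x : ℝ, x = Real.exp (-C₂) - δ := ⟨_, rfl⟩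
  rw [← hαdef] at hα
  have hβpos : 0 < Real.exp (-C₂) - δ/2 := by linarith
  obtain ⟨β, hβdef⟩ : ∃ x : ℝ, x = -Real.log (Real.exp (-C₂) - δ/2) := ⟨_, rfl⟩
  have hβexp : Real.exp (-β) = Real.exp (-C₂) - δ/2 := by
    rw [hβdef, neg_neg, Real.exp_log hβpos]
  have hβC₂ : C₂ < β := by
    have h := Real.log_lt_log hβpos (by linarith : Real.exp (-C₂) - δ/2 < Real.exp (-C₂))
    rw [Real.log_exp] at h
    rw [hβdef]; linarith
  have hβ0 : 0 ≤ β := le_of_lt (lt_of_le_of_lt hC₂ hβC₂)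
  obtain ⟨r, hrdef⟩ : ∃ x : ℝ, x = min (1/2 : ℝ) ((β - C₂)/(10*C₂+10)) := ⟨_, rfl⟩
  have hr0 : 0 < r := by
    rw [hrdef]
    exact lt_min (by norm_num) (div_pos (by linarith) (by linarith))
  have hr12 : r ≤ 1/2 := by rw [hrdef]; exact min_le_left _ _
  have hrβ : (10*C₂+10)*r ≤ β - C₂ := by
    have h := min_le_right (1/2 : ℝ) ((β - C₂)/(10*C₂+10))
    rw [← hrdef] at h
    rw [mul_comm]
    exact (le_div_iff₀ (by linarith)).1 h
  obtain ⟨W, hWdef⟩ : ∃ x : ℝ, x = 8*C₁/δ := ⟨_, rfl⟩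
  have hW0 : 0 ≤ W := by rw [hWdef]; positivity
  have hsqrtℓ : 0 < Real.sqrt ℓ := Real.sqrt_pos.2 hℓ
  have he1 : 0 ≤ 2/α := div_nonneg (by norm_num) hα.le
  have he2 : 0 ≤ W/Real.sqrt ℓ := div_nonneg hW0 hsqrtℓ.le
  have he3 : 0 ≤ W*(2*C₁+2)/r := div_nonneg (mul_nonneg hW0 (by linarith)) hr0.le
  have he4 : 0 ≤ W^2*(2*C₂+2)/r := div_nonneg (mul_nonneg (sq_nonneg W) (by linarith)) hr0.le
  obtain ⟨Λ, hΛdef⟩ : ∃ x : ℝ,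
      x = 2 + 2/α + W/Real.sqrt ℓ + W + W*(2*C₁+2)/r + W^2*(2*C₂+2)/r := ⟨_, rfl⟩
  have hΛ2 : 2 ≤ Λ := by rw [hΛdef]; linarith
  have hΛt1 : 2/α ≤ Λ := by rw [hΛdef]; linarith
  have hΛt2 : W/Real.sqrt ℓ ≤ Λ := by rw [hΛdef]; linarith
  have hΛt3 : W ≤ Λ := by rw [hΛdef]; linarith
  have hΛt4 : W*(2*C₁+2)/r ≤ Λ := by rw [hΛdef]; linarith
  have hΛt5 : W^2*(2*C₂+2)/r ≤ Λ := by rw [hΛdef]; linarith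
  refine ⟨Real.exp (-Λ), Real.exp_pos _, ?_⟩
  intro η hη hη1 hηΛ f hfB hf00 hi hii
  obtain ⟨L₀, hL₀def⟩ : ∃ x : ℝ, x = -Real.log η := ⟨_, rfl⟩
  have hL₀Λ : Λ < L₀ := by
    have h := Real.log_lt_log hη hηΛ
    rw [Real.log_exp] at h
    rw [hL₀def]; linarith
  have hL₀2 : 2 ≤ L₀ := by linarith
  have hL₀1 : 1 ≤ L₀ := by linarith
  have hL₀pos : 0 < L₀ := by linarith
  have hden1 : (0:ℝ) < 2*C₁+2 := by linarith
  have hden2 : (0:ℝ) < 2*C₂*L₀+2 := by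
    linarith only [mul_nonneg hC₂ hL₀pos.le]
  obtain ⟨h, hhdef⟩ : ∃ x : ℝ,
      x = min (min ℓ 1) (min ((r/(2*C₁+2))^2) (r/(2*C₂*L₀+2))) := ⟨_, rfl⟩
  have hh0 : 0 < h := by
    rw [hhdef]
    exact lt_min (lt_min hℓ one_pos)
      (lt_min (pow_pos (div_pos hr0 hden1) 2) (div_pos hr0 hden2))
  have hhℓ : h ≤ ℓ := by
    rw [hhdef]; exact le_trans (min_le_left _ _) (min_le_left _ _)
  have hh1 : h ≤ 1 := by
    rw [hhdef]; exact le_trans (min_le_left _ _) (min_le_right _ _)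
  have hhsq : h ≤ (r/(2*C₁+2))^2 := by
    rw [hhdef]; exact le_trans (min_le_right _ _) (min_le_left _ _)
  have hhC₂ : h ≤ r/(2*C₂*L₀+2) := by
    rw [hhdef]; exact le_trans (min_le_right _ _) (min_le_right _ _)
  have hhr : h ≤ r := by
    have e1 : (r/(2*C₁+2))^2 ≤ (r/2)^2 := by
      apply pow_le_pow_left₀ (div_nonneg hr0.le hden1.le)
      apply div_le_div_of_nonneg_left hr0.le (by norm_num) (by linarith)
    nlinarith only [hr0.le, hr12, hhsq, e1, mul_nonneg hr0.le (by linarith : (0:ℝ) ≤ 1/2 - r)]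
  have hsqh1 : Real.sqrt h ≤ r/(2*C₁+2) := by
    have e := Real.sqrt_le_sqrt hhsq
    rwa [Real.sqrt_sq (div_nonneg hr0.le hden1.le)] at e
  have hC₁h : C₁ * Real.sqrt h ≤ r/2 := by
    have h6 : C₁ * Real.sqrt h ≤ C₁ * (r/(2*C₁+2)) := mul_le_mul_of_nonneg_left hsqh1 hC₁
    have hq : (r/(2*C₁+2))*(2*C₁+2) = r := div_mul_cancel₀ r hden1.ne'
    linarith only [h6, hq, mul_nonneg hC₁ (div_nonneg hr0.le hden1.le), div_nonneg hr0.le hden1.le]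
  have hC₂h : C₂ * L₀ * h ≤ r/2 := by
    have hq : (r/(2*C₂*L₀+2))*(2*C₂*L₀+2) = r := div_mul_cancel₀ r hden2.ne'
    have h6 : C₂ * L₀ * h ≤ C₂ * L₀ * (r/(2*C₂*L₀+2)) :=
      mul_le_mul_of_nonneg_left hhC₂ (mul_nonneg hC₂ hL₀pos.le)
    linarith only [h6, hq, div_nonneg hr0.le hden2.le,
      mul_nonneg (mul_nonneg hC₂ hL₀pos.le) (div_nonneg hr0.le hden2.le)]
  obtain ⟨n, hndef⟩ : ∃ k : ℕ, k = ⌈1/h⌉₊ := ⟨_, rfl⟩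
  have hnh1 : 1 ≤ (n:ℝ)*h := by
    have e := Nat.le_ceil (1/h)
    rw [← hndef] at e
    have e2 : (1/h)*h ≤ (n:ℝ)*h := mul_le_mul_of_nonneg_right e hh0.le
    rw [one_div, inv_mul_cancel₀ hh0.ne'] at e2
    exact e2
  have hnh2 : (n:ℝ)*h ≤ 1 + h := by
    have e := (Nat.ceil_lt_add_one (le_of_lt (div_pos one_pos hh0))).le
    rw [← hndef] at e
    have e2 : (n:ℝ)*h ≤ (1/h+1)*h := mul_le_mul_of_nonneg_right e hh0.le
    have e3 : (1/h+1)*h = 1 + h := by field_simp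
    linarith
  have hWL0 : 0 ≤ W/L₀ := div_nonneg hW0 hL₀pos.le
  have hWL : W/L₀ ≤ Real.sqrt h := by
    rw [Real.le_sqrt hWL0 hh0.le, hhdef]
    have c1 : (W/L₀)^2 ≤ ℓ := by
      have e1 : W/L₀ ≤ Real.sqrt ℓ := by
        rw [div_le_iff₀ hL₀pos]
        have e2 : W/Real.sqrt ℓ ≤ L₀ := by linarith
        have := (div_le_iff₀ hsqrtℓ).1 e2
        linarith
      have := pow_le_pow_left₀ hWL0 e1 2
      rwa [Real.sq_sqrt hℓ.le] at this
    have c2 : (W/L₀)^2 ≤ 1 := by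
      have e1 : W/L₀ ≤ 1 := by
        rw [div_le_one hL₀pos]; linarith
      have := pow_le_pow_left₀ hWL0 e1 2
      simpa using this
    have c3 : (W/L₀)^2 ≤ (r/(2*C₁+2))^2 := by
      apply pow_le_pow_left₀ hWL0
      rw [div_le_div_iff₀ hL₀pos hden1]
      have e2 : W*(2*C₁+2)/r ≤ L₀ := by linarith
      have := (div_le_iff₀ hr0).1 e2
      linarith
    have c4 : (W/L₀)^2 ≤ r/(2*C₂*L₀+2) := by
      rw [div_pow, div_le_div_iff₀ (pow_pos hL₀pos 2) hden2]
      have e2 : W^2*(2*C₂+2)/r ≤ L₀ := by linarith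
      have e3 := (div_le_iff₀ hr0).1 e2
      have e4 : W^2*(2*C₂*L₀+2) ≤ W^2*((2*C₂+2)*L₀) := by
        apply mul_le_mul_of_nonneg_left _ (sq_nonneg W)
        linarith only [hL₀1]
      have e5 := mul_le_mul_of_nonneg_right e3 hL₀pos.le
      linarith only [e4, e5]
    exact le_min (le_min c1 c2) (le_min c3 c4)
  obtain ⟨a, hadef⟩ : ∃ x : ℝ, x = (1+2*r)*C₂*h := ⟨_, rfl⟩
  obtain ⟨c, hcdef⟩ : ∃ x : ℝ, x = (1+2*r)*C₁*Real.sqrt h := ⟨_, rfl⟩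
  have hsq0 : 0 ≤ Real.sqrt h := Real.sqrt_nonneg h
  have hc0 : 0 ≤ c := by
    rw [hcdef]; exact mul_nonneg (mul_nonneg (by linarith) hC₁) hsq0
  have ha0 : 0 ≤ a := by
    rw [hadef]; exact mul_nonneg (mul_nonneg (by linarith) hC₂) hh0.le
  have har : a ≤ r := by
    rw [hadef]
    have h3 : C₂ * h ≤ r/2 := by
      nlinarith only [hC₂h, mul_nonneg hC₂ hh0.le, hL₀1]
    nlinarith only [h3, mul_nonneg hC₂ hh0.le, hr12]
  have h1a : (0:ℝ) < 1 - a := by linarith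
  have hpow : Real.exp (-β) ≤ (1-a)^n := by
    have hna : (n:ℝ)*a ≤ β*(1-a) := by
      have e1 : (n:ℝ)*a = (1+2*r)*C₂*((n:ℝ)*h) := by rw [hadef]; ring
      have e2 : (1+2*r)*C₂*((n:ℝ)*h) ≤ (1+2*r)*C₂*(1+h) :=
        mul_le_mul_of_nonneg_left hnh2 (mul_nonneg (by linarith) hC₂)
      have e3 : (1+2*r)*C₂*(1+h) ≤ (1+2*r)*C₂*(1+r) :=
        mul_le_mul_of_nonneg_left (by linarith) (mul_nonneg (by linarith) hC₂)
      have e4 : (1+2*r)*C₂*(1+r) ≤ β*(1-r) := by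
        have p := mul_nonneg (by linarith : (0:ℝ) ≤ β - C₂ - (10*C₂+10)*r)
          (by linarith : (0:ℝ) ≤ 1 - r)
        have q1 := mul_nonneg hr0.le (by linarith : (0:ℝ) ≤ 1/2 - r)
        have q2 := mul_nonneg (mul_nonneg hC₂ hr0.le) (by linarith : (0:ℝ) ≤ 1/2 - r)
        nlinarith only [p, q1, q2, hr0.le, hC₂]
      have e5 : β*(1-r) ≤ β*(1-a) :=
        mul_le_mul_of_nonneg_left (by linarith) hβ0
      linarith
    have hfrac : (n:ℝ)*(a/(1-a)) ≤ β := by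
      rw [mul_div_assoc']
      rw [div_le_iff₀ h1a]
      linarith
    calc Real.exp (-β) ≤ Real.exp (-((n:ℝ)*(a/(1-a)))) := Real.exp_le_exp.2 (by linarith)
      _ ≤ (1-a)^n := aux_exp_le_pow n (by linarith) ha0
  have hnc : (n:ℝ)*c ≤ δ*L₀/2 := by
    have hsq2 : Real.sqrt h * Real.sqrt h = h := Real.mul_self_sqrt hh0.le
    have e1 : (n:ℝ)*c*Real.sqrt h ≤ 4*C₁ := by
      have e0 : (n:ℝ)*c*Real.sqrt h = (1+2*r)*C₁*((n:ℝ)*h) := by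
        rw [hcdef]; linear_combination ((n:ℝ)*(1+2*r)*C₁) * hsq2
      rw [e0]
      have e2 : (1+2*r)*C₁*((n:ℝ)*h) ≤ (1+2*r)*C₁*(1+h) :=
        mul_le_mul_of_nonneg_left hnh2 (mul_nonneg (by linarith) hC₁)
      have u1 := mul_nonneg hC₁ (by linarith : (0:ℝ) ≤ 1 - h)
      have u2 := mul_nonneg hC₁ (by linarith : (0:ℝ) ≤ 1/2 - r)
      have u3 := mul_nonneg (mul_nonneg hC₁ hh0.le) (by linarith : (0:ℝ) ≤ 1/2 - r)
      linarith only [e2, u1, u2, u3]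
    have e2 : 4*C₁ ≤ (δ*L₀/2)*Real.sqrt h := by
      have e3 : (δ*L₀/2)*(W/L₀) = 4*C₁ := by
        rw [hWdef]; field_simp; ring
      have e5 : 0 ≤ δ*L₀/2 := by positivity
      have e6 := mul_le_mul_of_nonneg_left hWL e5
      linarith only [e3, e6]
    have hsqpos : 0 < Real.sqrt h := Real.sqrt_pos.2 hh0
    nlinarith only [e1, e2, hsqpos]
  have hnum : α*L₀ ≤ L₀*(1-a)^n - (n:ℝ)*c := by
    have e1 := mul_le_mul_of_nonneg_left hpow hL₀pos.le
    rw [hβexp] at e1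
    rw [hαdef]; linarith only [e1, hnc]
  have hα2 : 2 ≤ α*L₀ := by
    have h9 : 2/α ≤ L₀ := by linarith
    have := (div_le_iff₀ hα).1 h9
    linarith only [this]
    -- f-dependent part
  obtain ⟨B, hB⟩ := hfB
  have hB0 : 0 ≤ B := le_trans (norm_nonneg _) (hB 0 0 le_rfl le_rfl zero_le_one)
  have hBr : ∀ u : ℝ, 0 ≤ u → u ≤ 1 → ‖f 0 u‖ ≤ B := fun u hu0 hu1 => hB 0 u le_rfl hu0 hu1
  have hsup_le : ∀ s t : ℝ, s ≤ t → ∀ cc : ℝ, (∀ u : ℝ, s ≤ u → u ≤ t → ‖f 0 u‖ ≤ cc) →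
      (⨆ u : Icc s t, ‖f 0 (u:ℝ)‖) ≤ cc := by
    intro s t hst cc hcc
    haveI : Nonempty (Icc s t) := Set.Nonempty.to_subtype (Set.nonempty_Icc.2 hst)
    exact ciSup_le fun u => hcc u u.2.1 u.2.2
  have hle_sup : ∀ s t : ℝ, 0 ≤ s → t ≤ 1 → ∀ u : ℝ, s ≤ u → u ≤ t →
      ‖f 0 u‖ ≤ (⨆ v : Icc s t, ‖f 0 (v:ℝ)‖) := by
    intro s t hs0 ht1 u hu1 hu2
    have hbdd : BddAbove (Set.range fun v : Icc s t => ‖f 0 (v:ℝ)‖) := by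
      refine ⟨B, ?_⟩
      rintro x ⟨v, rfl⟩
      exact hBr v (le_trans hs0 v.2.1) (le_trans v.2.2 ht1)
    exact le_ciSup hbdd (⟨u, hu1, hu2⟩ : Icc s t)
  obtain ⟨m, hmdef⟩ : ∃ g : ℝ → ℝ,
      g = fun u : ℝ => (⨆ v : Icc (0:ℝ) u, ‖f 0 (v:ℝ)‖) + η := ⟨_, rfl⟩
  have hm_eq : ∀ u : ℝ, m u = (⨆ v : Icc (0:ℝ) u, ‖f 0 (v:ℝ)‖) + η := fun u => by rw [hmdef]
  have hnorm_le_m : ∀ u : ℝ, 0 ≤ u → u ≤ 1 → ‖f 0 u‖ ≤ m u := by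
    intro u hu0 hu1
    have e := hle_sup 0 u le_rfl hu1 u hu0 le_rfl
    rw [hm_eq u]
    linarith only [e, hη.le]
  have hm_mono : ∀ s t : ℝ, 0 ≤ s → s ≤ t → t ≤ 1 → m s ≤ m t := by
    intro s t hs0 hst ht1
    rw [hm_eq s, hm_eq t]
    have e : (⨆ v : Icc (0:ℝ) s, ‖f 0 (v:ℝ)‖) ≤ (⨆ v : Icc (0:ℝ) t, ‖f 0 (v:ℝ)‖) :=
      hsup_le 0 s hs0 _ (fun u hu0 hus => hle_sup 0 t le_rfl ht1 u hu0 (hus.trans hst))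
    linarith only [e]
  have hm0 : m 0 = η := by
    rw [hm_eq 0]
    have h1 : (⨆ v : Icc (0:ℝ) 0, ‖f 0 (v:ℝ)‖) ≤ 0 := by
      apply hsup_le 0 0 le_rfl
      intro u hu0 hu1
      have hu : u = 0 := le_antisymm hu1 hu0
      rw [hu, hf00]; simp
    have h2 : 0 ≤ (⨆ v : Icc (0:ℝ) 0, ‖f 0 (v:ℝ)‖) :=
      le_trans (norm_nonneg _) (hle_sup 0 0 le_rfl zero_le_one 0 le_rfl le_rfl)
    rw [le_antisymm h1 h2, zero_add]
  have hmη : ∀ u : ℝ, 0 ≤ u → u ≤ 1 → η ≤ m u := fun u hu0 hu1 => hm0 ▸ hm_mono 0 u le_rfl hu0 hu1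
  have hm_pos : ∀ u : ℝ, 0 ≤ u → u ≤ 1 → 0 < m u := fun u hu0 hu1 =>
    lt_of_lt_of_le hη (hmη u hu0 hu1)
  have hexp1lt : Real.exp (-1) < 1 := by
    rw [show (1:ℝ) = Real.exp 0 from (Real.exp_zero).symm]
    exact Real.exp_lt_exp.2 (by norm_num)
  -- step inequality
  have hstepL : ∀ s t : ℝ, 0 ≤ s → s ≤ t → t ≤ 1 → t - s ≤ h → m t ≤ Real.exp (-1) →
      m t ≤ m s + m t * (C₁ * Real.sqrt (t-s) + C₂ * (-Real.log (m t)) * (t - s)) := by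
    intro s t hs0 hst ht1 hdh hmtu
    have hmt_pos : 0 < m t := hm_pos t (hs0.trans hst) ht1
    have hLt1 : 1 ≤ -Real.log (m t) := by
      have e := (Real.log_le_log_iff hmt_pos (Real.exp_pos _)).2 hmtu
      rw [Real.log_exp] at e; linarith only [e]
    have hterm0 : 0 ≤ m t * (C₁ * Real.sqrt (t-s) + C₂ * (-Real.log (m t)) * (t - s)) := by
      apply mul_nonneg hmt_pos.le
      have e2 : 0 ≤ C₂ * (-Real.log (m t)) * (t-s) :=
        mul_nonneg (mul_nonneg hC₂ (by linarith only [hLt1])) (by linarith only [hst])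
      have e3 : 0 ≤ C₁ * Real.sqrt (t-s) := mul_nonneg hC₁ (Real.sqrt_nonneg _)
      linarith only [e2, e3]
    have hkey2 : (⨆ v : Icc (0:ℝ) t, ‖f 0 (v:ℝ)‖) ≤
        (m s - η) + m t * (C₁ * Real.sqrt (t-s) + C₂ * (-Real.log (m t)) * (t - s)) := by
      apply hsup_le 0 t (hs0.trans hst)
      intro u hu0 hut
      rcases le_or_gt u s with hus | hsu
      · have e := hle_sup 0 s le_rfl (hst.trans ht1) u hu0 hus
        have hms := hm_eq s
        linarith only [e, hms, hterm0]
      · have hsu' : s ≤ u := hsu.le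
        have hu1 : u ≤ 1 := hut.trans ht1
        have hii' := hii s u hs0 hsu' hu1
        have hi' := hi s u hs0 hsu' hu1 (by linarith only [hdh, hhℓ, hut] : u - s ≤ ℓ)
        rw [← Real.sqrt_eq_rpow] at hi'
        obtain ⟨X, hXdef⟩ : ∃ x : ℝ, x = (⨆ v : Icc s u, ‖f 0 (v:ℝ)‖) + η := ⟨_, rfl⟩
        rw [← hXdef] at hi'
        have hsup0 : 0 ≤ (⨆ v : Icc s u, ‖f 0 (v:ℝ)‖) :=
          le_trans (norm_nonneg _) (hle_sup s u hs0 hu1 s le_rfl hsu')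
        have hX_pos : 0 < X := by rw [hXdef]; linarith only [hsup0, hη]
        have hXm : X ≤ m t := by
          rw [hXdef, hm_eq t]
          have e : (⨆ v : Icc s u, ‖f 0 (v:ℝ)‖) ≤ (⨆ v : Icc (0:ℝ) t, ‖f 0 (v:ℝ)‖) :=
            hsup_le s u hsu' _
              (fun w hw1 hw2 => hle_sup 0 t le_rfl ht1 w (hs0.trans hw1) (hw2.trans hut))
          linarith only [e]
        have hX1 : X < 1 := lt_of_le_of_lt (hXm.trans hmtu) hexp1lt
        have hlogX : |Real.log X| = -Real.log X := abs_of_neg (Real.log_neg hX_pos hX1)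
        rw [hlogX] at hi'
        have hfs : ‖f 0 s‖ ≤ m s - η := by
          have e := hle_sup 0 s le_rfl (hst.trans ht1) s hs0 le_rfl
          have hms := hm_eq s
          linarith only [e, hms]
        have hxl := aux_xlogx hX_pos hXm hmtu
        have hnlt : 0 ≤ -Real.log (m t) := by linarith only [hLt1]
        have hterm1 : C₁ * X * Real.sqrt (u-s) ≤ C₁ * m t * Real.sqrt (t-s) :=
          mul_le_mul (mul_le_mul_of_nonneg_left hXm hC₁)
            (Real.sqrt_le_sqrt (by linarith only [hst, hut])) (Real.sqrt_nonneg _)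
            (mul_nonneg hC₁ hmt_pos.le)
        have hterm2 : C₂ * X * (-Real.log X) * (u-s) ≤
            C₂ * m t * (-Real.log (m t)) * (t-s) := by
          have q1 : C₂ * (X * (-Real.log X)) ≤ C₂ * (m t * (-Real.log (m t))) :=
            mul_le_mul_of_nonneg_left hxl hC₂
          have q0 : 0 ≤ C₂ * (X * (-Real.log X)) := by
            apply mul_nonneg hC₂
            apply mul_nonneg hX_pos.le
            have e : Real.log X < 0 := Real.log_neg hX_pos hX1
            linarith only [e]
          have q3 : 0 ≤ C₂ * (m t * (-Real.log (m t))) :=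
            mul_nonneg hC₂ (mul_nonneg hmt_pos.le hnlt)
          have q2 : C₂ * (X * (-Real.log X)) * (u-s) ≤ C₂ * (m t * (-Real.log (m t))) * (t-s) :=
            mul_le_mul q1 (by linarith only [hut]) (by linarith only [hsu']) q3
          linarith only [q2]
        linarith only [hii', hi', hfs, hterm1, hterm2]
    have hmt_eq := hm_eq t
    have hms_eq := hm_eq s
    linarith only [hkey2, hmt_eq, hms_eq]
  -- Hoelder-type continuity
  obtain ⟨K, hKdef⟩ : ∃ x : ℝ, x = (C₁ + C₂ * (L₀ + |Real.log (B+1)|)) * (B+1) := ⟨_, rfl⟩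
  have habsB : 0 ≤ |Real.log (B+1)| := abs_nonneg _
  have hK0 : 0 ≤ K := by
    rw [hKdef]
    apply mul_nonneg _ (by linarith only [hB0])
    have e1 : 0 ≤ L₀ + |Real.log (B+1)| := by linarith only [habsB, hL₀pos]
    have e2 := mul_nonneg hC₂ e1
    linarith only [e2, hC₁]
  have hHold : ∀ s t : ℝ, 0 ≤ s → s ≤ t → t ≤ 1 → t - s ≤ ℓ → t - s ≤ 1 →
      m t ≤ m s + K * Real.sqrt (t-s) := by
    intro s t hs0 hst ht1 hdℓ hd1
    have hKs0 : 0 ≤ K * Real.sqrt (t-s) := mul_nonneg hK0 (Real.sqrt_nonneg _)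
    have hms_eq := hm_eq s
    have hmt_eq := hm_eq t
    have hkey2 : (⨆ v : Icc (0:ℝ) t, ‖f 0 (v:ℝ)‖) ≤ (m s - η) + K * Real.sqrt (t-s) := by
      apply hsup_le 0 t (hs0.trans hst)
      intro u hu0 hut
      rcases le_or_gt u s with hus | hsu
      · have e := hle_sup 0 s le_rfl (hst.trans ht1) u hu0 hus
        linarith only [e, hms_eq, hKs0]
      · have hsu' : s ≤ u := hsu.le
        have hu1 : u ≤ 1 := hut.trans ht1
        have hii' := hii s u hs0 hsu' hu1
        have hi' := hi s u hs0 hsu' hu1 (by linarith only [hdℓ, hut] : u - s ≤ ℓ)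
        rw [← Real.sqrt_eq_rpow] at hi'
        obtain ⟨X, hXdef⟩ : ∃ x : ℝ, x = (⨆ v : Icc s u, ‖f 0 (v:ℝ)‖) + η := ⟨_, rfl⟩
        rw [← hXdef] at hi'
        have hsupB : (⨆ v : Icc s u, ‖f 0 (v:ℝ)‖) ≤ B :=
          hsup_le s u hsu' B (fun w hw1 hw2 => hBr w (hs0.trans hw1) (hw2.trans hu1))
        have hsup0 : 0 ≤ (⨆ v : Icc s u, ‖f 0 (v:ℝ)‖) :=
          le_trans (norm_nonneg _) (hle_sup s u hs0 hu1 s le_rfl hsu')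
        have hX_pos : 0 < X := by rw [hXdef]; linarith only [hsup0, hη]
        have hXB : X ≤ B + 1 := by rw [hXdef]; linarith only [hsupB, hη1.le]
        have hlogX : |Real.log X| ≤ L₀ + |Real.log (B+1)| := by
          rcases le_or_gt X 1 with hX1 | hX1
          · rw [abs_of_nonpos (Real.log_nonpos hX_pos.le hX1)]
            have hηX : η ≤ X := by rw [hXdef]; linarith only [hsup0]
            have e := (Real.log_le_log_iff hη hX_pos).2 hηX
            rw [hL₀def]
            linarith only [e, habsB]
          · rw [abs_of_pos (Real.log_pos hX1)]
            have e := (Real.log_le_log_iff hX_pos (by linarith only [hB0] : (0:ℝ) < B+1)).2 hXB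
            have h9 := le_abs_self (Real.log (B+1))
            linarith only [e, h9, hL₀pos]
        have hfs : ‖f 0 s‖ ≤ m s - η := by
          have e := hle_sup 0 s le_rfl (hst.trans ht1) s hs0 le_rfl
          linarith only [e, hms_eq]
        have hsq_us : Real.sqrt (u-s) ≤ Real.sqrt (t-s) :=
          Real.sqrt_le_sqrt (by linarith only [hst, hut])
        have hd_le : u - s ≤ Real.sqrt (t-s) := by
          have w1 : Real.sqrt (t-s) ≤ 1 := by
            rw [show (1:ℝ) = Real.sqrt 1 from Real.sqrt_one.symm]
            exact Real.sqrt_le_sqrt (by linarith only [hd1])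
          have w2 := Real.mul_self_sqrt (by linarith only [hst] : (0:ℝ) ≤ t-s)
          have w3 := Real.sqrt_nonneg (t-s)
          nlinarith only [w1, w2, w3, (by linarith only [hut] : u - s ≤ t - s)]
        have hXlog0 : 0 ≤ |Real.log X| := abs_nonneg _
        have ht1' : C₁ * X * Real.sqrt (u-s) ≤ C₁ * (B+1) * Real.sqrt (t-s) :=
          mul_le_mul (mul_le_mul_of_nonneg_left hXB hC₁) hsq_us (Real.sqrt_nonneg _)
            (mul_nonneg hC₁ (by linarith only [hB0]))
        have ht2' : C₂ * X * |Real.log X| * (u-s) ≤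
            C₂ * (B+1) * (L₀ + |Real.log (B+1)|) * Real.sqrt (t-s) := by
          have p1 : C₂ * X ≤ C₂ * (B+1) := mul_le_mul_of_nonneg_left hXB hC₂
          have p2 : C₂ * X * |Real.log X| ≤ C₂ * (B+1) * (L₀ + |Real.log (B+1)|) :=
            mul_le_mul p1 hlogX hXlog0 (mul_nonneg hC₂ (by linarith only [hB0]))
          have p3 : 0 ≤ C₂ * X * |Real.log X| :=
            mul_nonneg (mul_nonneg hC₂ hX_pos.le) hXlog0
          have p4 : 0 ≤ C₂ * (B+1) * (L₀ + |Real.log (B+1)|) :=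
            mul_nonneg (mul_nonneg hC₂ (by linarith only [hB0]))
              (by linarith only [habsB, hL₀pos])
          exact mul_le_mul p2 hd_le (by linarith only [hsu']) p4
        have hKexp : K * Real.sqrt (t-s) = C₁ * (B+1) * Real.sqrt (t-s)
            + C₂ * (B+1) * (L₀ + |Real.log (B+1)|) * Real.sqrt (t-s) := by
          rw [hKdef]; ring
        linarith only [hii', hi', hfs, ht1', ht2', hKexp]
    linarith only [hkey2, hms_eq, hmt_eq]
  -- applying the iteration lemma
  have happly : ∀ T : ℝ, 0 ≤ T → T ≤ 1 → (∀ u : ℝ, 0 ≤ u → u ≤ T → m u ≤ Real.exp (-1)) →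
      ∀ t : ℝ, 0 ≤ t → t ≤ T → m t ≤ Real.exp (-(α*L₀)) := by
    intro T hT0 hT1 hθ t ht0 htT
    have hiter := iter_lemma m η C₁ C₂ h r T hη (by rw [← hL₀def]; exact hL₀1) hC₁ hC₂
      hh0 hr0 hr12 hC₁h (by rw [← hL₀def]; exact hC₂h) hT1 hm0 hm_mono hstepL hθ
    have hthis := hiter t ht0 htT n (by linarith only [hnh1, htT, hT1] : t ≤ (n:ℝ) * h)
    rw [← hadef, ← hcdef, ← hL₀def] at hthis
    have hmt_pos := hm_pos t ht0 (htT.trans hT1)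
    have hlog : Real.log (m t) ≤ -(α*L₀) := by linarith only [hnum, hthis]
    calc m t = Real.exp (Real.log (m t)) := (Real.exp_log hmt_pos).symm
      _ ≤ Real.exp (-(α*L₀)) := Real.exp_le_exp.2 hlog
  have hexp12 : Real.exp (-2) < Real.exp (-1) := Real.exp_lt_exp.2 (by norm_num)
  have hηe2 : η < Real.exp (-2) :=
    lt_of_lt_of_le hηΛ (Real.exp_le_exp.2 (by linarith only [hΛ2]))
  -- crossing argument: m stays below exp(-1)
  have hcross : ∀ t : ℝ, 0 ≤ t → t ≤ 1 → m t ≤ Real.exp (-1) := by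
    by_contra hcon
    push_neg at hcon
    obtain ⟨t₀, ht₀0, ht₀1, hmt₀⟩ := hcon
    set S : Set ℝ := {u | (0 ≤ u ∧ u ≤ 1) ∧ Real.exp (-1) < m u} with hSdef
    have hSne : S.Nonempty := ⟨t₀, ⟨⟨ht₀0, ht₀1⟩, hmt₀⟩⟩
    have hSbdd : BddBelow S := ⟨0, fun u hu => hu.1.1⟩
    set T : ℝ := sInf S with hTdef
    have hT0 : 0 ≤ T := le_csInf hSne (fun u hu => hu.1.1)
    have hT1 : T ≤ 1 := le_trans (csInf_le hSbdd ⟨⟨ht₀0, ht₀1⟩, hmt₀⟩) ht₀1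
    have hbelow : ∀ u : ℝ, 0 ≤ u → u < T → m u ≤ Real.exp (-1) := by
      intro u hu0 huT
      by_contra hcu
      push_neg at hcu
      have huS : u ∈ S := ⟨⟨hu0, le_trans huT.le hT1⟩, hcu⟩
      exact absurd (csInf_le hSbdd huS) (not_le.2 huT)
    have hmT : m T ≤ Real.exp (-1) := by
      rcases eq_or_lt_of_le hT0 with hT0' | hT0'
      · rw [← hT0', hm0]; linarith only [hηe2, hexp12]
      · by_contra hcT
        push_neg at hcT
        have hgap : 0 < m T - Real.exp (-1) := by linarith only [hcT]
        have hKp : (0:ℝ) < K + 1 := by linarith only [hK0]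
        obtain ⟨d, hddef⟩ : ∃ x : ℝ,
            x = min T (min (min ℓ 1) (((m T - Real.exp (-1))/(K+1))^2)) := ⟨_, rfl⟩
        have hd0 : 0 < d := by
          rw [hddef]
          exact lt_min hT0' (lt_min (lt_min hℓ one_pos) (pow_pos (div_pos hgap hKp) 2))
        have hdT : d ≤ T := by rw [hddef]; exact min_le_left _ _
        have hdℓ : d ≤ ℓ := by
          rw [hddef]
          exact le_trans (min_le_right _ _) (le_trans (min_le_left _ _) (min_le_left _ _))
        have hd1 : d ≤ 1 := by
          rw [hddef]
          exact le_trans (min_le_right _ _) (le_trans (min_le_left _ _) (min_le_right _ _))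
        have hdsq : d ≤ ((m T - Real.exp (-1))/(K+1))^2 := by
          rw [hddef]
          exact le_trans (min_le_right _ _) (min_le_right _ _)
        have hH := hHold (T-d) T (by linarith only [hdT, hd0]) (by linarith only [hd0.le]) hT1
          (by linarith only [hdℓ] : T - (T-d) ≤ ℓ) (by linarith only [hd1] : T - (T-d) ≤ 1)
        rw [show T - (T-d) = d by ring] at hH
        have hmTd := hbelow (T-d) (by linarith only [hdT, hd0]) (by linarith only [hd0])
        have hsqd : Real.sqrt d ≤ (m T - Real.exp (-1))/(K+1) := by
          have e := Real.sqrt_le_sqrt hdsq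
          rwa [Real.sqrt_sq (div_nonneg hgap.le hKp.le)] at e
        have e1 : K * Real.sqrt d ≤ K * ((m T - Real.exp (-1))/(K+1)) :=
          mul_le_mul_of_nonneg_left hsqd hK0
        have hfr : K * ((m T - Real.exp (-1))/(K+1)) < m T - Real.exp (-1) := by
          have e2 : (m T - Real.exp (-1))/(K+1) * (K+1) = m T - Real.exp (-1) :=
            div_mul_cancel₀ _ hKp.ne'
          have e3 : 0 < (m T - Real.exp (-1))/(K+1) := div_pos hgap hKp
          nlinarith only [e2, e3, hK0]
        linarith only [hH, hmTd, e1, hfr]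
    have hθT : ∀ u : ℝ, 0 ≤ u → u ≤ T → m u ≤ Real.exp (-1) := by
      intro u hu0 huT
      rcases lt_or_eq_of_le huT with hlt | heq
      · exact hbelow u hu0 hlt
      · rw [heq]; exact hmT
    have hmT2 : m T ≤ Real.exp (-(α*L₀)) := happly T hT0 hT1 hθT T hT0 le_rfl
    have hmT2' : m T ≤ Real.exp (-2) :=
      le_trans hmT2 (Real.exp_le_exp.2 (by linarith only [hα2]))
    have hgap0 : 0 < Real.exp (-1) - Real.exp (-2) := by linarith only [hexp12]
    have hKp : (0:ℝ) < K + 1 := by linarith only [hK0]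
    obtain ⟨ε₂, hε₂def⟩ : ∃ x : ℝ,
        x = min (min ℓ 1) (((Real.exp (-1) - Real.exp (-2))/(K+1))^2) := ⟨_, rfl⟩
    have hε₂0 : 0 < ε₂ := by
      rw [hε₂def]
      exact lt_min (lt_min hℓ one_pos) (pow_pos (div_pos hgap0 hKp) 2)
    obtain ⟨u, huS, huT⟩ := (csInf_lt_iff hSbdd hSne).1
      (by rw [← hTdef]; linarith only [hε₂0] : sInf S < T + ε₂)
    have huT' : T ≤ u := csInf_le hSbdd huS
    have hu1 : u ≤ 1 := huS.1.2
    have hε₂ℓ : ε₂ ≤ ℓ := by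
      rw [hε₂def]; exact le_trans (min_le_left _ _) (min_le_left _ _)
    have hε₂1 : ε₂ ≤ 1 := by
      rw [hε₂def]; exact le_trans (min_le_left _ _) (min_le_right _ _)
    have hε₂sq : ε₂ ≤ ((Real.exp (-1) - Real.exp (-2))/(K+1))^2 := by
      rw [hε₂def]; exact min_le_right _ _
    have hH := hHold T u hT0 huT' hu1 (by linarith only [huT, hε₂ℓ] : u - T ≤ ℓ)
      (by linarith only [huT, hε₂1] : u - T ≤ 1)
    have hsqu : Real.sqrt (u - T) ≤ (Real.exp (-1) - Real.exp (-2))/(K+1) := by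
      have e := Real.sqrt_le_sqrt (show u - T ≤ ((Real.exp (-1) - Real.exp (-2))/(K+1))^2 by
        linarith only [huT, hε₂sq])
      rwa [Real.sqrt_sq (div_nonneg hgap0.le hKp.le)] at e
    have e1 : K * Real.sqrt (u-T) ≤ K * ((Real.exp (-1) - Real.exp (-2))/(K+1)) :=
      mul_le_mul_of_nonneg_left hsqu hK0
    have hfr : K * ((Real.exp (-1) - Real.exp (-2))/(K+1)) < Real.exp (-1) - Real.exp (-2) := by
      have e2 : (Real.exp (-1) - Real.exp (-2))/(K+1) * (K+1) = Real.exp (-1) - Real.exp (-2) :=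
        div_mul_cancel₀ _ hKp.ne'
      have e3 : 0 < (Real.exp (-1) - Real.exp (-2))/(K+1) := div_pos hgap0 hKp
      nlinarith only [e2, e3, hK0]
    have hmu : m u < Real.exp (-1) := by linarith only [hH, hmT2', e1, hfr]
    exact absurd huS.2 (not_lt.2 hmu.le)
  -- conclusion
  intro t ht0 ht1
  rw [← hαdef]
  have hmfin : m t ≤ Real.exp (-(α*L₀)) :=
    happly 1 zero_le_one le_rfl (fun u hu0 hu1 => hcross u hu0 hu1) t ht0 ht1
  have hrpow : η ^ α = Real.exp (-(α*L₀)) := by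
    rw [Real.rpow_def_of_pos hη, hL₀def]
    congr 1
    ring
  calc ‖f 0 t‖ ≤ m t := hnorm_le_m t ht0 ht1
    _ ≤ Real.exp (-(α*L₀)) := hmfin
    _ = η ^ α := hrpow.symm
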